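/- arXiv:2312.01160 — 3 statements merged into one kernel-verified Lean document; each statement's English description precedes it below -/
import Mathlib

section
/- Let R be a unital ring graded by a group Γ. Assume R is quasi-Baer: for every right ideal I of R there exists an idempotent ε ∈ R such that ann_r(I) = εR. Then R is graded quasi-Baer: for every graded right ideal I of R there exists a homogeneous idempotent ε ∈ R such that ann_r(I) = εR. -/
/-- `I` is a right ideal of `R` (as a subset). -/
def IsRightIdealSet {R : Type*} [Ring R] (I : Set R) : Prop :=
  0 ∈ I ∧ (∀ a ∈ I, ∀ b ∈ I, a + b ∈ I) ∧ (∀ a ∈ I, -a ∈ I) ∧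
    ∀ a ∈ I, ∀ x : R, a * x ∈ I

/-- The right annihilator of a subset `I` of `R`. -/
def rightAnn {R : Type*} [Ring R] (I : Set R) : Set R :=
  {x : R | ∀ a ∈ I, a * x = 0}

/-- If a unital `Γ`-graded ring `R` is quasi-Baer (the right annihilator of every right
ideal is `εR` for an idempotent `ε`), then `R` is graded quasi-Baer (the right
annihilator of every graded right ideal is `εR` for a homogeneous idempotent `ε`). -/
theorem quasiBaer_implies_graded_quasiBaer
    {Γ : Type*} [AddGroup Γ] [DecidableEq Γ]
    {R : Type*} [Ring R]
    (𝒜 : Γ → AddSubgroup R) [GradedRing 𝒜]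
    -- `R` is quasi-Baer
    (hqB : ∀ I : Set R, IsRightIdealSet I →
      ∃ ε : R, ε * ε = ε ∧ rightAnn I = {x : R | ∃ y : R, x = ε * y}) :
    -- `R` is graded quasi-Baer
    ∀ I : Set R, IsRightIdealSet I →
      (∀ a ∈ I, ∀ γ : Γ, ((DirectSum.decompose 𝒜 a) γ : R) ∈ I) →
      ∃ ε : R, ε * ε = ε ∧ (∃ γ : Γ, ε ∈ 𝒜 γ) ∧
        rightAnn I = {x : R | ∃ y : R, x = ε * y} := by
  classical
  intro I hI hgr
  obtain ⟨ε, hidem, hann⟩ := hqB I hI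
  -- the annihilator is graded
  have hanngr : ∀ x ∈ rightAnn I, ∀ γ : Γ,
      ((DirectSum.decompose 𝒜 x) γ : R) ∈ rightAnn I := by
    intro x hx γ a ha
    -- a * x_γ = Σ_δ a_δ * x_γ, and a_δ * x_γ = (a_δ * x)_{δ+γ} = 0
    conv_lhs => rw [← DirectSum.sum_support_decompose 𝒜 a]
    rw [Finset.sum_mul]
    refine Finset.sum_eq_zero fun δ _ => ?_
    have h1 : ((DirectSum.decompose 𝒜 a) δ : R) * ((DirectSum.decompose 𝒜 x) γ : R)
        = (DirectSum.decompose 𝒜 (((DirectSum.decompose 𝒜 a) δ : R) * x) (δ + γ) : R) :=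
      (DirectSum.coe_decompose_mul_add_of_left_mem 𝒜 (SetLike.coe_mem _)).symm
    rw [h1, hx _ (hgr a ha δ), DirectSum.decompose_zero]
    rfl
  -- ε acts as left identity on the annihilator
  have hεann : ε ∈ rightAnn I := by
    rw [hann]; exact ⟨ε, hidem.symm⟩
  have hleft : ∀ x ∈ rightAnn I, ε * x = x := by
    intro x hx
    rw [hann] at hx
    obtain ⟨y, rfl⟩ := hx
    rw [← mul_assoc, hidem]
  -- ε₀ : degree-0 component of ε
  set ε₀ : R := ((DirectSum.decompose 𝒜 ε) 0 : R) with hε₀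
  have hε₀mem : ε₀ ∈ 𝒜 0 := SetLike.coe_mem _
  have hε₀ann : ε₀ ∈ rightAnn I := hanngr ε hεann 0
  -- ε₀ acts as left identity on homogeneous elements of the annihilator
  have hhom : ∀ γ : Γ, ∀ x ∈ rightAnn I, x ∈ 𝒜 γ → ε₀ * x = x := by
    intro γ x hx hxγ
    have h1 : ε₀ * x = (DirectSum.decompose 𝒜 (ε * x) (0 + γ) : R) :=
      (DirectSum.coe_decompose_mul_add_of_right_mem 𝒜 hxγ).symm
    rw [h1, hleft x hx, zero_add, DirectSum.decompose_of_mem_same 𝒜 hxγ]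
  have hε₀idem : ε₀ * ε₀ = ε₀ := hhom 0 ε₀ hε₀ann hε₀mem
  -- ε₀ acts as left identity on the whole annihilator
  have hε₀left : ∀ x ∈ rightAnn I, ε₀ * x = x := by
    intro x hx
    conv_lhs => rw [← DirectSum.sum_support_decompose 𝒜 x]
    rw [Finset.mul_sum]
    conv_rhs => rw [← DirectSum.sum_support_decompose 𝒜 x]
    exact Finset.sum_congr rfl fun γ _ =>
      hhom γ _ (hanngr x hx γ) (SetLike.coe_mem _)
  refine ⟨ε₀, hε₀idem, ⟨0, hε₀mem⟩, ?_⟩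
  ext x
  constructor
  · intro hx
    exact ⟨x, (hε₀left x hx).symm⟩
  · rintro ⟨y, rfl⟩
    intro a ha
    rw [← mul_assoc, hε₀ann a ha, zero_mul]
end

section
/- Let R be a unital ring graded by a group Γ. Assume: (i) for every graded two-sided ideal J of R there exists a homogeneous idempotent ε ∈ R such that ann_l(J) = Rε; and (ii) for every two-sided ideal I of R, the right annihilator ann_r(I) is a graded two-sided ideal. Then R is quasi-Baer: for every two-sided ideal I of R there exists an idempotent ε ∈ R such that ann_r(I) = εR (indeed ann_r(I) = (1−ε')R for the homogeneous idempotent ε' with ann_l(ann_r(I)) = Rε'). -/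
/-- `I` is a two-sided ideal of `R` (as a subset). -/
def IsTwoSidedIdealSet {R : Type*} [Ring R] (I : Set R) : Prop :=
  0 ∈ I ∧ (∀ a ∈ I, ∀ b ∈ I, a + b ∈ I) ∧ (∀ a ∈ I, -a ∈ I) ∧
    (∀ a ∈ I, ∀ x : R, x * a ∈ I) ∧ ∀ a ∈ I, ∀ x : R, a * x ∈ I

/-- The left annihilator of a subset `I` of `R`. -/
def leftAnn {R : Type*} [Ring R] (I : Set R) : Set R :=
  {x : R | ∀ a ∈ I, x * a = 0}

/-- If `R` is a unital `Γ`-graded ring such that (i) the left annihilator of every graded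
two-sided ideal is `Rε` for a homogeneous idempotent `ε`, and (ii) the right annihilator
of every two-sided ideal is a graded two-sided ideal, then `R` is quasi-Baer: the right
annihilator of every two-sided ideal `I` is `εR` for an idempotent `ε`; indeed
`ann_r(I) = (1 - ε')R` for any homogeneous idempotent `ε'` with
`ann_l(ann_r(I)) = Rε'`. -/
theorem graded_quasiBaer_implies_quasiBaer
    {Γ : Type*} [AddGroup Γ] [DecidableEq Γ]
    {R : Type*} [Ring R]
    (𝒜 : Γ → AddSubgroup R) [GradedRing 𝒜]
    -- (i) `R` is graded quasi-Baer (for two-sided ideals, stated on the left)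
    (hgqB : ∀ J : Set R, IsTwoSidedIdealSet J →
      (∀ a ∈ J, ∀ γ : Γ, ((DirectSum.decompose 𝒜 a) γ : R) ∈ J) →
      ∃ ε : R, ε * ε = ε ∧ (∃ γ : Γ, ε ∈ 𝒜 γ) ∧
        leftAnn J = {x : R | ∃ y : R, x = y * ε})
    -- (ii) the right annihilator of any two-sided ideal is a graded two-sided ideal
    (hanngr : ∀ I : Set R, IsTwoSidedIdealSet I →
      IsTwoSidedIdealSet (rightAnn I) ∧
        ∀ a ∈ rightAnn I, ∀ γ : Γ, ((DirectSum.decompose 𝒜 a) γ : R) ∈ rightAnn I) :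
    -- `R` is quasi-Baer
    ∀ I : Set R, IsTwoSidedIdealSet I →
      (∃ ε : R, ε * ε = ε ∧ rightAnn I = {x : R | ∃ y : R, x = ε * y}) ∧
      -- indeed, `ann_r(I) = (1-ε')R` for any homogeneous idempotent `ε'`
      -- with `ann_l(ann_r(I)) = Rε'`
      (∀ ε' : R, ε' * ε' = ε' → (∃ γ : Γ, ε' ∈ 𝒜 γ) →
        leftAnn (rightAnn I) = {x : R | ∃ y : R, x = y * ε'} →
        rightAnn I = {x : R | ∃ y : R, x = (1 - ε') * y}) := by
  intro I hI
  have key : ∀ ε' : R, ε' * ε' = ε' →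
      leftAnn (rightAnn I) = {x : R | ∃ y : R, x = y * ε'} →
      rightAnn I = {x : R | ∃ y : R, x = (1 - ε') * y} := by
    intro ε' hidem hann
    have hε'mem : ε' ∈ leftAnn (rightAnn I) := by
      rw [hann]; exact ⟨ε', hidem.symm⟩
    ext x
    constructor
    · intro hx
      refine ⟨x, ?_⟩
      have h0 : ε' * x = 0 := hε'mem x hx
      rw [sub_mul, one_mul, h0, sub_zero]
    · rintro ⟨y, rfl⟩
      intro a ha
      have haL : a ∈ leftAnn (rightAnn I) := fun k hk => hk a ha
      rw [hann] at haL
      obtain ⟨z, rfl⟩ := haL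
      calc z * ε' * ((1 - ε') * y) = z * (ε' * (1 - ε')) * y := by noncomm_ring
        _ = 0 := by rw [mul_sub, mul_one, hidem, sub_self, mul_zero, zero_mul]
  obtain ⟨hK, hKgr⟩ := hanngr I hI
  obtain ⟨ε', hidem, hhom, hann⟩ := hgqB (rightAnn I) hK hKgr
  refine ⟨⟨1 - ε', by rw [sub_mul, mul_sub, mul_sub, one_mul, mul_one, hidem]; noncomm_ring, key ε' hidem hann⟩,
    fun ε'' h1 _ h2 => key ε'' h1 h2⟩
end

section
/- Let E be a directed graph and let H ⊆ E⁰. Then H^⊥ = E⁰ − R(H) is a hereditary set, and if in addition H is hereditary, then no vertex belongs to both B_H and B_{H^⊥}; that is, B_{H^⊥} ∩ B_H = ∅. Consequently, for any S ⊆ B_H one has B_{H^⊥} − S = B_{H^⊥}. -/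
/- A directed graph is given by a vertex type `V`, an edge type `E`, and source and
range maps `s r : E → V`. -/

/-- `Reaches s r u w` : there is a (possibly trivial) path from `u` to `w`. -/
def Reaches {V E : Type*} (s r : E → V) : V → V → Prop :=
  Relation.ReflTransGen (fun u w => ∃ e : E, s e = u ∧ r e = w)

/-- A set `H` of vertices is hereditary if the range of any path with source in `H`
is in `H`. -/
def IsHereditary {V E : Type*} (s r : E → V) (H : Set V) : Prop :=
  ∀ u w : V, Reaches s r u w → u ∈ H → w ∈ H

/-- The root `R(W)` of a set `W` of vertices: the vertices which emit a (possibly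
trivial) path into `W`. -/
def Root {V E : Type*} (s r : E → V) (W : Set V) : Set V :=
  {v : V | ∃ w ∈ W, Reaches s r v w}

/-- The set `B_H` of breaking vertices of `H`: infinite emitters outside of `H` which
emit a nonzero finite number of edges into the complement of `H`. -/
def Breaking {V E : Type*} (s r : E → V) (H : Set V) : Set V :=
  {v : V | v ∉ H ∧ (s ⁻¹' {v}).Infinite ∧
    (s ⁻¹' {v} ∩ r ⁻¹' Hᶜ).Nonempty ∧ (s ⁻¹' {v} ∩ r ⁻¹' Hᶜ).Finite}

/-- For any `H ⊆ E⁰`, the set `H^⊥ = E⁰ − R(H)` is hereditary; and if `H` is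
hereditary, then `B_{H^⊥} ∩ B_H = ∅`, so `B_{H^⊥} − S = B_{H^⊥}` for any `S ⊆ B_H`. -/
theorem perp_hereditary_and_breaking_disjoint
    {V E : Type*} (s r : E → V) (H : Set V) :
    IsHereditary s r (Root s r H)ᶜ ∧
    (IsHereditary s r H →
      Breaking s r (Root s r H)ᶜ ∩ Breaking s r H = ∅ ∧
      ∀ S : Set V, S ⊆ Breaking s r H →
        Breaking s r (Root s r H)ᶜ \ S = Breaking s r (Root s r H)ᶜ) := by
  have hdisj : Breaking s r (Root s r H)ᶜ ∩ Breaking s r H = ∅ := by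
    ext v
    simp only [Set.mem_inter_iff, Set.mem_empty_iff_false, iff_false]
    rintro ⟨⟨-, hinf, -, hfin1⟩, ⟨-, -, -, hfin2⟩⟩
    apply hinf
    have : s ⁻¹' {v} ⊆ (s ⁻¹' {v} ∩ r ⁻¹' ((Root s r H)ᶜ)ᶜ) ∪ (s ⁻¹' {v} ∩ r ⁻¹' Hᶜ) := by
      intro e he
      by_cases h : r e ∈ (Root s r H)ᶜ
      · right
        exact ⟨he, fun hH => h ⟨r e, hH, Relation.ReflTransGen.refl⟩⟩
      · left; exact ⟨he, h⟩
    exact ((hfin1.union hfin2).subset this)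
  refine ⟨?_, fun _ => ⟨hdisj, fun S hS => ?_⟩⟩
  · intro u w huw hu hw
    obtain ⟨x, hx, hwx⟩ := hw
    exact hu ⟨x, hx, huw.trans hwx⟩
  · ext v
    simp only [Set.mem_diff, and_iff_left_iff_imp]
    intro hvB hvS
    have : v ∈ Breaking s r (Root s r H)ᶜ ∩ Breaking s r H := ⟨hvB, hS hvS⟩
    rw [hdisj] at this
    exact this
end
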